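/- Let T be a ℤ-weighted lattice tile with weights w : ℤ×ℤ → ℤ, let n be a positive integer, and let c, d be relatively prime integers with d ≠ 0; set μ = −c/d. Then every μ-slope class of T has weighted area divisible by n (i.e., n divides ∑_{r∈ℤ} w_{(i+rd, j−rc)} for every (i,j) ∈ ℤ×ℤ) if and only if f_T lies in the ideal of ℤ[X^ℤ,Y^ℤ] generated by (X^d−Y^c)(X−1)(Y−1) and n(X−1)(Y−1). -/

import Mathlib

open Finset

section Aux

variable (c d : ℤ)

private lemma coordFormula (hcd : IsCoprime c d) (hd : d ≠ 0) {x1 x2 y1 y2 : ℤ}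
    (h : c * x1 + d * x2 = c * y1 + d * y2) :
    x1 = y1 + (x1 - y1) / d * d ∧ x2 = y2 - (x1 - y1) / d * c := by
  have hdvd : d ∣ x1 - y1 := by
    have h1 : d ∣ (x1 - y1) * c := ⟨y2 - x2, by ring_nf; linarith⟩
    exact hcd.symm.dvd_of_dvd_mul_right h1
  have h2 : (x1 - y1) / d * d = x1 - y1 := Int.ediv_mul_cancel hdvd
  refine ⟨by linarith, ?_⟩
  have h3 : d * ((x1 - y1) / d * c) = d * (y2 - x2) := by
    have h4 : c * ((x1 - y1) / d * d) = c * (x1 - y1) := by rw [h2]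
    linarith
  have h5 := mul_left_cancel₀ hd h3
  linarith

private lemma classSum_eq (hcd : IsCoprime c d) (hd : d ≠ 0) (w : ℤ × ℤ →₀ ℤ) (i j : ℤ) :
    ∑ᶠ r : ℤ, w (i + r * d, j - r * c) =
      ∑ p ∈ w.support.filter (fun p => c * p.1 + d * p.2 = c * i + d * j), w p := by
  classical
  set S := w.support.filter (fun p => c * p.1 + d * p.2 = c * i + d * j) with hS
  set ρ : ℤ × ℤ → ℤ := fun p => (p.1 - i) / d with hρ
  have hform : ∀ p ∈ S, p.1 = i + ρ p * d ∧ p.2 = j - ρ p * c := by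
    intro p hp
    rw [hS, Finset.mem_filter] at hp
    exact coordFormula c d hcd hd hp.2
  have hsub : Function.support (fun r : ℤ => w (i + r * d, j - r * c)) ⊆ ↑(S.image ρ) := by
    intro r hr
    simp only [Function.mem_support] at hr
    have hmem : ((i + r * d, j - r * c) : ℤ × ℤ) ∈ S := by
      rw [hS, Finset.mem_filter]
      exact ⟨Finsupp.mem_support_iff.2 hr, by ring⟩
    have hρr : ρ (i + r * d, j - r * c) = r := by
      simp only [hρ]
      rw [show i + r * d - i = r * d by ring, Int.mul_ediv_cancel _ hd]
    rw [Finset.coe_image]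
    exact ⟨_, hmem, hρr⟩
  rw [finsum_eq_finset_sum_of_support_subset _ hsub]
  have hinj : ∀ x ∈ S, ∀ y ∈ S, ρ x = ρ y → x = y := by
    intro x hx y hy hxy
    obtain ⟨hx1, hx2⟩ := hform x hx
    obtain ⟨hy1, hy2⟩ := hform y hy
    exact Prod.ext (by rw [hx1, hy1, hxy]) (by rw [hx2, hy2, hxy])
  rw [Finset.sum_image hinj]
  apply Finset.sum_congr rfl
  intro p hp
  obtain ⟨h1, h2⟩ := hform p hp
  rw [← h1, ← h2]

private lemma mapDomain_apply_filter {β : Type*} [DecidableEq β] (u : (ℤ × ℤ) →₀ ℤ)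
    (g : ℤ × ℤ → β) (q : β) :
    (Finsupp.mapDomain g u) q = ∑ p ∈ u.support.filter (fun p => g p = q), u p := by
  classical
  rw [Finsupp.mapDomain, Finsupp.sum_apply, Finsupp.sum, Finset.sum_filter]
  apply Finset.sum_congr rfl
  intro p _
  rw [Finsupp.single_apply]

private noncomputable def genA : AddMonoidAlgebra ℤ (ℤ × ℤ) :=
  AddMonoidAlgebra.single (d, (0 : ℤ)) (1 : ℤ) - AddMonoidAlgebra.single ((0 : ℤ), c) (1 : ℤ)

private lemma base_mem : AddMonoidAlgebra.single ((d : ℤ), -c) (1 : ℤ) - 1 ∈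
    Ideal.span {genA c d} := by
  have key : AddMonoidAlgebra.single ((d : ℤ), -c) (1 : ℤ) - 1 =
      AddMonoidAlgebra.single ((0 : ℤ), -c) (1 : ℤ) * genA c d := by
    rw [genA, mul_sub, AddMonoidAlgebra.single_mul_single, AddMonoidAlgebra.single_mul_single,
      AddMonoidAlgebra.one_def]
    norm_num
    rfl
  rw [key]
  exact Ideal.mul_mem_left _ _ (Ideal.subset_span rfl)

private lemma nat_mem (m : ℕ) :
    AddMonoidAlgebra.single (((m : ℤ) * d, -((m : ℤ) * c)) : ℤ × ℤ) (1 : ℤ) - 1 ∈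
      Ideal.span {genA c d} := by
  induction m with
  | zero =>
      have h0 : ((((0:ℕ) : ℤ) * d, -(((0:ℕ) : ℤ) * c)) : ℤ × ℤ) = (0 : ℤ × ℤ) := by
        rw [Prod.ext_iff]; norm_num
      rw [h0, ← AddMonoidAlgebra.one_def, sub_self]
      exact zero_mem _
  | succ m ih =>
      have hstep : AddMonoidAlgebra.single ((((m : ℤ) + 1) * d, -(((m : ℤ) + 1) * c)) : ℤ × ℤ)
          (1 : ℤ) = AddMonoidAlgebra.single (((m : ℤ) * d, -((m : ℤ) * c)) : ℤ × ℤ) 1 *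
            AddMonoidAlgebra.single ((d, -c) : ℤ × ℤ) 1 := by
        rw [AddMonoidAlgebra.single_mul_single, one_mul]
        congr 1
        exact Prod.ext (by simp only [Prod.mk_add_mk]; ring)
          (by simp only [Prod.mk_add_mk]; ring)
      have hdecomp : AddMonoidAlgebra.single ((((m : ℤ) + 1) * d, -(((m : ℤ) + 1) * c)) : ℤ × ℤ)
          (1 : ℤ) - 1 =
          AddMonoidAlgebra.single (((m : ℤ) * d, -((m : ℤ) * c)) : ℤ × ℤ) 1 *
            (AddMonoidAlgebra.single ((d, -c) : ℤ × ℤ) 1 - 1) +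
          (AddMonoidAlgebra.single (((m : ℤ) * d, -((m : ℤ) * c)) : ℤ × ℤ) 1 - 1) := by
        rw [hstep]; ring
      push_cast
      rw [hdecomp]
      exact add_mem (Ideal.mul_mem_left _ _ (base_mem c d)) ih

private lemma int_mem (r : ℤ) :
    AddMonoidAlgebra.single ((r * d, -(r * c)) : ℤ × ℤ) (1 : ℤ) - 1 ∈
      Ideal.span {genA c d} := by
  obtain ⟨m, hm | hm⟩ := r.eq_nat_or_neg
  · subst hm; exact nat_mem c d m
  · subst hm
    have hmul : AddMonoidAlgebra.single (((-(m : ℤ)) * d, -((-(m : ℤ)) * c)) : ℤ × ℤ) (1 : ℤ) *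
        AddMonoidAlgebra.single (((m : ℤ) * d, -((m : ℤ) * c)) : ℤ × ℤ) 1 = 1 := by
      rw [AddMonoidAlgebra.single_mul_single, one_mul, AddMonoidAlgebra.one_def]
      congr 1
      rw [Prod.ext_iff]
      constructor <;> (simp only [Prod.mk_add_mk, Prod.fst_zero, Prod.snd_zero]; ring)
    have hdecomp : AddMonoidAlgebra.single (((-(m : ℤ)) * d, -((-(m : ℤ)) * c)) : ℤ × ℤ)
        (1 : ℤ) - 1 =
        -(AddMonoidAlgebra.single (((-(m : ℤ)) * d, -((-(m : ℤ)) * c)) : ℤ × ℤ) 1 *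
          (AddMonoidAlgebra.single (((m : ℤ) * d, -((m : ℤ) * c)) : ℤ × ℤ) 1 - 1)) := by
      rw [mul_sub, hmul]; ring
    rw [hdecomp]
    exact neg_mem (Ideal.mul_mem_left _ _ (nat_mem c d m))

private lemma single_sub_mem (hcd : IsCoprime c d) (hd : d ≠ 0) {p q : ℤ × ℤ}
    (h : c * p.1 + d * p.2 = c * q.1 + d * q.2) :
    AddMonoidAlgebra.single p (1 : ℤ) - AddMonoidAlgebra.single q 1 ∈
      Ideal.span {genA c d} := by
  obtain ⟨h1, h2⟩ := coordFormula c d hcd hd h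
  set r := (p.1 - q.1) / d with hr
  have hp : AddMonoidAlgebra.single p (1 : ℤ) =
      AddMonoidAlgebra.single q 1 *
        AddMonoidAlgebra.single ((r * d, -(r * c)) : ℤ × ℤ) 1 := by
    rw [AddMonoidAlgebra.single_mul_single, one_mul]
    congr 1
    refine Prod.ext ?_ ?_ <;> simp only [Prod.fst_add, Prod.snd_add]
    · exact h1
    · rw [h2]; ring
  have hdecomp : AddMonoidAlgebra.single p (1 : ℤ) - AddMonoidAlgebra.single q 1 =
      AddMonoidAlgebra.single q 1 *
        (AddMonoidAlgebra.single ((r * d, -(r * c)) : ℤ × ℤ) 1 - 1) := by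
    rw [hp]; ring
  rw [hdecomp]
  exact Ideal.mul_mem_left _ _ (int_mem c d r)

end Aux

/-- The polynomial `f_T = ∑ w_{ij} X^i Y^j (X-1)(Y-1)` of the lattice tile with
weights `w`, in `ℤ[X^ℤ, Y^ℤ] = AddMonoidAlgebra ℤ (ℤ × ℤ)`. -/
noncomputable def latticePolyZ (w : ℤ × ℤ →₀ ℤ) : AddMonoidAlgebra ℤ (ℤ × ℤ) :=
  w.sum fun ij a => AddMonoidAlgebra.single ij a *
    ((AddMonoidAlgebra.single ((1 : ℤ), (0 : ℤ)) (1 : ℤ) - 1) *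
      (AddMonoidAlgebra.single ((0 : ℤ), (1 : ℤ)) (1 : ℤ) - 1))

/-- For `μ = -c/d` with `c, d` coprime and `d ≠ 0`, every `μ`-slope class of a
ℤ-weighted lattice tile `T` has weighted area divisible by `n` if and only if
`f_T` lies in the ideal of `ℤ[X^ℤ, Y^ℤ]` generated by `(X^d - Y^c)(X-1)(Y-1)`
and `n(X-1)(Y-1)`. -/
theorem slope_classes_divisible_iff_mem_ideal (w : ℤ × ℤ →₀ ℤ)
    (n : ℕ) (hn : 0 < n) (c d : ℤ) (hcd : IsCoprime c d) (hd : d ≠ 0) :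
    (∀ i j : ℤ, (n : ℤ) ∣ ∑ᶠ r : ℤ, w (i + r * d, j - r * c)) ↔
      latticePolyZ w ∈ Ideal.span
        {(AddMonoidAlgebra.single (d, (0 : ℤ)) (1 : ℤ) -
            AddMonoidAlgebra.single ((0 : ℤ), c) (1 : ℤ)) *
          ((AddMonoidAlgebra.single ((1 : ℤ), (0 : ℤ)) (1 : ℤ) - 1) *
            (AddMonoidAlgebra.single ((0 : ℤ), (1 : ℤ)) (1 : ℤ) - 1)),
         (n : AddMonoidAlgebra ℤ (ℤ × ℤ)) *
          ((AddMonoidAlgebra.single ((1 : ℤ), (0 : ℤ)) (1 : ℤ) - 1) *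
            (AddMonoidAlgebra.single ((0 : ℤ), (1 : ℤ)) (1 : ℤ) - 1))} := by
  classical
  set P : AddMonoidAlgebra ℤ (ℤ × ℤ) :=
    (AddMonoidAlgebra.single ((1 : ℤ), (0 : ℤ)) (1 : ℤ) - 1) *
      (AddMonoidAlgebra.single ((0 : ℤ), (1 : ℤ)) (1 : ℤ) - 1) with hP
  have hgen : genA c d = AddMonoidAlgebra.single (d, (0 : ℤ)) (1 : ℤ) -
      AddMonoidAlgebra.single ((0 : ℤ), c) (1 : ℤ) := rfl
  have hPne : P ≠ 0 := by
    apply mul_ne_zero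
    · intro h
      rw [sub_eq_zero, AddMonoidAlgebra.one_def] at h
      rw [AddMonoidAlgebra.single_inj] at h
      simp at h
    · intro h
      rw [sub_eq_zero, AddMonoidAlgebra.one_def] at h
      rw [AddMonoidAlgebra.single_inj] at h
      simp at h
  have hlp : latticePolyZ w = (w.sum fun p a => AddMonoidAlgebra.single p a) * P := by
    rw [latticePolyZ, Finsupp.sum_mul]
  have hws : (w.sum fun p a => AddMonoidAlgebra.single p a) = AddMonoidAlgebra.ofCoeff w :=
    AddMonoidAlgebra.sum_coeff_single (AddMonoidAlgebra.ofCoeff w)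
  have main : (∀ i j : ℤ, (n : ℤ) ∣ ∑ᶠ r : ℤ, w (i + r * d, j - r * c)) ↔
      (w.sum fun p a => AddMonoidAlgebra.single p a) ∈
        Ideal.span {genA c d, ((n : ℕ) : AddMonoidAlgebra ℤ (ℤ × ℤ))} := by
    constructor
    · intro h
      obtain ⟨a, b, hab⟩ := id hcd
      set π : ℤ × ℤ → ℤ := fun p => c * p.1 + d * p.2 with hπ
      set s : ℤ → ℤ × ℤ := fun k => (a * k, b * k) with hs
      have hπs : ∀ k, π (s k) = k := by
        intro k
        simp only [hπ, hs]
        linear_combination k * hab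
      set w' : (ℤ × ℤ) →₀ ℤ := Finsupp.mapDomain (fun p => s (π p)) w with hw'
      have h1 : (w.sum fun p a => AddMonoidAlgebra.single p a) -
          (w'.sum fun p a => AddMonoidAlgebra.single p a) ∈ Ideal.span {genA c d} := by
        rw [hw', Finsupp.sum_mapDomain_index (fun p => AddMonoidAlgebra.single_zero p)
          (fun p b₁ b₂ => AddMonoidAlgebra.single_add p b₁ b₂)]
        rw [Finsupp.sum, Finsupp.sum, ← Finset.sum_sub_distrib]
        apply Ideal.sum_mem
        intro p hp
        have hdiff : AddMonoidAlgebra.single p (w p) -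
            AddMonoidAlgebra.single (s (π p)) (w p) =
            (AddMonoidAlgebra.single p (1 : ℤ) -
              AddMonoidAlgebra.single (s (π p)) 1) *
              AddMonoidAlgebra.single (((0 : ℤ), (0 : ℤ)) : ℤ × ℤ) (w p) := by
          rw [sub_mul, AddMonoidAlgebra.single_mul_single, AddMonoidAlgebra.single_mul_single,
            show (((0 : ℤ), (0 : ℤ)) : ℤ × ℤ) = (0 : ℤ × ℤ) from rfl, add_zero, add_zero,
            one_mul]
        rw [hdiff]
        apply Ideal.mul_mem_right
        apply single_sub_mem c d hcd hd
        show π p = π (s (π p))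
        rw [hπs]
      have hdivq : ∀ q : ℤ × ℤ, (n : ℤ) ∣ w' q := by
        intro q
        have happ : w' q = ∑ p ∈ w.support.filter (fun p => s (π p) = q), w p := by
          rw [hw']
          exact mapDomain_apply_filter w (fun p => s (π p)) q
        by_cases hne : (w.support.filter (fun p => s (π p) = q)).Nonempty
        · obtain ⟨p0, hp0⟩ := hne
          rw [Finset.mem_filter] at hp0
          have hfilter : w.support.filter (fun p => s (π p) = q) =
              w.support.filter (fun p => c * p.1 + d * p.2 = c * p0.1 + d * p0.2) := by
            apply Finset.filter_congr
            intro p _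
            constructor
            · intro hpq
              have hh : π (s (π p)) = π (s (π p0)) := by rw [hpq, hp0.2]
              rw [hπs, hπs] at hh
              exact hh
            · intro hpp
              have hh : π p = π p0 := hpp
              rw [← hp0.2, hh]
          rw [happ, hfilter, ← classSum_eq c d hcd hd w p0.1 p0.2]
          exact h p0.1 p0.2
        · rw [Finset.not_nonempty_iff_eq_empty] at hne
          rw [happ, hne, Finset.sum_empty]
          exact dvd_zero _
      set v : AddMonoidAlgebra ℤ (ℤ × ℤ) :=
        AddMonoidAlgebra.ofCoeff (w'.mapRange (fun x => x / (n : ℤ)) (by simp)) with hv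
      have hveq : (AddMonoidAlgebra.ofCoeff w' : AddMonoidAlgebra ℤ (ℤ × ℤ)) =
          ((n : ℕ) : AddMonoidAlgebra ℤ (ℤ × ℤ)) * (v : AddMonoidAlgebra ℤ (ℤ × ℤ)) := by
        apply AddMonoidAlgebra.coeff_injective
        apply Finsupp.ext
        intro q
        rw [AddMonoidAlgebra.natCast_def, AddMonoidAlgebra.coeff_single_zero_mul]
        rw [hv]
        simp only [AddMonoidAlgebra.coeff_ofCoeff, Finsupp.mapRange_apply]
        exact (Int.mul_ediv_cancel' (hdivq q)).symm
      have h2 : (AddMonoidAlgebra.ofCoeff w' : AddMonoidAlgebra ℤ (ℤ × ℤ)) ∈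
          Ideal.span {((n : ℕ) : AddMonoidAlgebra ℤ (ℤ × ℤ))} :=
        Ideal.mem_span_singleton.2 ⟨(v : AddMonoidAlgebra ℤ (ℤ × ℤ)), hveq⟩
      have hsub1 : Ideal.span {genA c d} ≤
          Ideal.span {genA c d, ((n : ℕ) : AddMonoidAlgebra ℤ (ℤ × ℤ))} :=
        Ideal.span_mono (by simp)
      have hsub2 : Ideal.span {((n : ℕ) : AddMonoidAlgebra ℤ (ℤ × ℤ))} ≤
          Ideal.span {genA c d, ((n : ℕ) : AddMonoidAlgebra ℤ (ℤ × ℤ))} :=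
        Ideal.span_mono (Set.subset_insert _ _)
      have hws' : (w'.sum fun p a => AddMonoidAlgebra.single p a) = AddMonoidAlgebra.ofCoeff w' :=
        AddMonoidAlgebra.sum_coeff_single (AddMonoidAlgebra.ofCoeff w')
      rw [hws'] at h1
      have := add_mem (hsub1 h1) (hsub2 h2)
      rwa [sub_add_cancel] at this
    · intro h i j
      obtain ⟨u, v, huv⟩ := Ideal.mem_span_pair.1 h
      set πhom : (ℤ × ℤ) →+ ℤ :=
        { toFun := fun p => c * p.1 + d * p.2,
          map_zero' := by simp,
          map_add' := fun p q => by
            simp only [Prod.fst_add, Prod.snd_add]; ring } with hπhom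
      set Φ := AddMonoidAlgebra.mapDomainRingHom ℤ πhom with hΦ
      have hΦdef : ∀ x : AddMonoidAlgebra ℤ (ℤ × ℤ), Φ x =
          AddMonoidAlgebra.ofCoeff (Finsupp.mapDomain (⇑πhom) x.coeff) :=
        fun x => rfl
      have hcoe : ⇑πhom = (fun p : ℤ × ℤ => c * p.1 + d * p.2) := rfl
      have hΦA : Φ (genA c d) = 0 := by
        rw [hgen, map_sub, hΦdef, hΦdef, AddMonoidAlgebra.coeff_single, AddMonoidAlgebra.coeff_single,
          Finsupp.mapDomain_single, Finsupp.mapDomain_single]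
        have hpt : πhom (d, (0 : ℤ)) = πhom ((0 : ℤ), c) := by
          show c * d + d * 0 = c * 0 + d * c
          ring
        rw [hpt, sub_self]
      have hΦw := congrArg Φ huv
      rw [map_add, map_mul, map_mul, hΦA, mul_zero, zero_add, map_natCast, hws] at hΦw
      have hq := congrArg (fun f : AddMonoidAlgebra ℤ ℤ => f.coeff (c * i + d * j)) hΦw
      rw [AddMonoidAlgebra.natCast_def, AddMonoidAlgebra.coeff_mul_single_zero] at hq
      rw [hΦdef (AddMonoidAlgebra.ofCoeff w)] at hq
      simp only [AddMonoidAlgebra.coeff_ofCoeff] at hq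
      rw [hcoe,
        mapDomain_apply_filter w (fun p : ℤ × ℤ => c * p.1 + d * p.2) (c * i + d * j)] at hq
      rw [classSum_eq c d hcd hd w i j]
      exact ⟨(Φ v).coeff (c * i + d * j), by rw [← hq]; ring⟩
  rw [hlp]
  constructor
  · intro h
    obtain ⟨u, v, huv⟩ := Ideal.mem_span_pair.1 (main.1 h)
    rw [hgen] at huv
    refine Ideal.mem_span_pair.2 ⟨u, v, ?_⟩
    rw [← huv]
    ring
  · intro h
    apply main.2
    obtain ⟨u, v, huv⟩ := Ideal.mem_span_pair.1 h
    have hz : (u * genA c d + v * ((n : ℕ) : AddMonoidAlgebra ℤ (ℤ × ℤ)) -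
        (w.sum fun p a => AddMonoidAlgebra.single p a)) * P = 0 := by
      rw [hgen]
      linear_combination huv
    have hz2 := (mul_eq_zero.1 hz).resolve_right hPne
    rw [sub_eq_zero] at hz2
    exact Ideal.mem_span_pair.2 ⟨u, v, hz2⟩
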